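/- Assume G is connected and both D > 0 and T > 0. For every a ∈ ℝ^L with all components strictly positive, f(a) = 0 if and only if there exists a constant c ∈ ℝ such that (a_i − D/T)·N_i(a) + a_i = c·a_i·N_i(a) for every i = 1,…,L. -/

import Mathlib

open Finset Filter

/-- `auxN G κ a i = κ + ∑_{j ~ i} a_j`. -/
noncomputable def auxN {L : ℕ} (G : SimpleGraph (Fin L)) [DecidableRel G.Adj] (κ : ℝ)
    (a : Fin L → ℝ) (i : Fin L) : ℝ :=
  κ + ∑ j ∈ G.neighborFinset i, a j

/-- The auxin transport vector field
`f_i(a) = D·∑_{k ~ i}(a_k − a_i) + T·∑_{k ~ i}(a_k·a_i/N_k(a) − a_i·a_k/N_i(a))`. -/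
noncomputable def auxF {L : ℕ} (G : SimpleGraph (Fin L)) [DecidableRel G.Adj] (κ D T : ℝ)
    (a : Fin L → ℝ) (i : Fin L) : ℝ :=
  D * ∑ k ∈ G.neighborFinset i, (a k - a i) +
    T * ∑ k ∈ G.neighborFinset i,
      (a k * a i / auxN G κ a k - a i * a k / auxN G κ a i)

lemma aux_swap_sum {L : ℕ} (G : SimpleGraph (Fin L)) [DecidableRel G.Adj]
    (F : Fin L → Fin L → ℝ) :
    ∑ i, ∑ k ∈ G.neighborFinset i, F i k = ∑ i, ∑ k ∈ G.neighborFinset i, F k i := by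
  have h : ∀ i : Fin L, G.neighborFinset i = Finset.univ.filter (G.Adj i) := by
    intro i; ext k; simp
  simp only [h, Finset.sum_filter]
  rw [Finset.sum_comm]
  refine Finset.sum_congr rfl fun i _ => Finset.sum_congr rfl fun k _ => ?_
  exact if_congr (G.adj_comm k i) rfl rfl

lemma aux_const_of_adj {L : ℕ} (G : SimpleGraph (Fin L)) (hG : G.Connected)
    (φ : Fin L → ℝ) (h : ∀ i j, G.Adj i j → φ i = φ j) : ∀ i j, φ i = φ j := by
  intro i j
  obtain ⟨w⟩ := hG.preconnected i j
  induction w with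
  | nil => rfl
  | cons hadj p ih => exact (h _ _ hadj).trans ih

theorem auxin_critical_iff_quadratic {L : ℕ} (hL : 1 ≤ L) (G : SimpleGraph (Fin L))
    [DecidableRel G.Adj] (hG : G.Connected) (κ D T : ℝ) (hκ : 0 < κ) (hD : 0 < D) (hT : 0 < T)
    (a : Fin L → ℝ) (ha : ∀ i, 0 < a i) :
    (∀ i, auxF G κ D T a i = 0) ↔
      ∃ c : ℝ, ∀ i, (a i - D / T) * auxN G κ a i + a i = c * (a i * auxN G κ a i) := by
  have hN : ∀ i, 0 < auxN G κ a i := by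
    intro i
    have : (0:ℝ) ≤ ∑ j ∈ G.neighborFinset i, a j :=
      Finset.sum_nonneg fun j _ => (ha j).le
    unfold auxN; linarith
  set φ : Fin L → ℝ := fun i => 1 / auxN G κ a i - (D / T) / a i with hφ
  have hNne : ∀ i, auxN G κ a i ≠ 0 := fun i => (hN i).ne'
  have hane : ∀ i, a i ≠ 0 := fun i => (ha i).ne'
  have hTne : T ≠ 0 := hT.ne'
  -- the quadratic condition at a vertex is equivalent to φ being the constant c - 1 there
  have hiff : ∀ (c : ℝ) (j : Fin L),
      ((a j - D / T) * auxN G κ a j + a j = c * (a j * auxN G κ a j)) ↔ φ j = c - 1 := by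
    intro c j
    simp only [hφ]
    have hN' := hNne j
    have ha' := hane j
    field_simp
    constructor <;> intro h <;> nlinarith [h]
  -- rewritten form of auxF
  have hF : ∀ i, auxF G κ D T a i = T * a i * ∑ k ∈ G.neighborFinset i, a k * (φ k - φ i) := by
    intro i
    unfold auxF
    rw [Finset.mul_sum, Finset.mul_sum, Finset.mul_sum, ← Finset.sum_add_distrib]
    refine Finset.sum_congr rfl fun k _ => ?_
    simp only [hφ]
    have hNi := hNne i
    have hNk := hNne k
    have hai := hane i
    have hak := hane k
    field_simp
    ring
  constructor
  · intro hzero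
    have hinner : ∀ i, ∑ k ∈ G.neighborFinset i, a k * (φ k - φ i) = 0 := by
      intro i
      have h0 := hzero i
      rw [hF i] at h0
      have hTa : T * a i ≠ 0 := mul_ne_zero hTne (hane i)
      exact (mul_eq_zero.mp h0).resolve_left hTa
    -- energy argument
    have hE : ∑ i, ∑ k ∈ G.neighborFinset i, a i * a k * (φ k - φ i) ^ 2 = 0 := by
      have hS2 : ∑ i, ∑ k ∈ G.neighborFinset i, a i * a k * (φ k - φ i) * φ i = 0 := by
        refine Finset.sum_eq_zero fun i _ => ?_
        have h1 : ∑ k ∈ G.neighborFinset i, a i * a k * (φ k - φ i) * φ i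
            = (a i * φ i) * ∑ k ∈ G.neighborFinset i, a k * (φ k - φ i) := by
          rw [Finset.mul_sum]
          exact Finset.sum_congr rfl fun k _ => by ring
        rw [h1, hinner i, mul_zero]
      have hS1 : ∑ i, ∑ k ∈ G.neighborFinset i, a i * a k * (φ k - φ i) * φ k = 0 := by
        rw [aux_swap_sum G (fun i k => a i * a k * (φ k - φ i) * φ k)]
        refine Finset.sum_eq_zero fun i _ => ?_
        have h1 : ∑ k ∈ G.neighborFinset i, a k * a i * (φ i - φ k) * φ i
            = (a i * φ i) * (- ∑ k ∈ G.neighborFinset i, a k * (φ k - φ i)) := by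
          rw [← Finset.sum_neg_distrib, Finset.mul_sum]
          exact Finset.sum_congr rfl fun k _ => by ring
        rw [h1, hinner i, neg_zero, mul_zero]
      calc ∑ i, ∑ k ∈ G.neighborFinset i, a i * a k * (φ k - φ i) ^ 2
          = ∑ i, ∑ k ∈ G.neighborFinset i,
              (a i * a k * (φ k - φ i) * φ k - a i * a k * (φ k - φ i) * φ i) := by
            exact Finset.sum_congr rfl fun i _ => Finset.sum_congr rfl fun k _ => by ring
        _ = 0 := by
            rw [Finset.sum_congr rfl fun i _ => Finset.sum_sub_distrib _ _,
              Finset.sum_sub_distrib, hS1, hS2, sub_zero]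
    have hterm : ∀ i k, G.Adj i k → φ i = φ k := by
      intro i k hik
      have hnn : ∀ i ∈ (Finset.univ : Finset (Fin L)),
          (0:ℝ) ≤ ∑ k ∈ G.neighborFinset i, a i * a k * (φ k - φ i) ^ 2 := by
        intro i _
        exact Finset.sum_nonneg fun k _ =>
          mul_nonneg (mul_nonneg (ha i).le (ha k).le) (sq_nonneg _)
      have h1 := (Finset.sum_eq_zero_iff_of_nonneg hnn).mp hE i (Finset.mem_univ i)
      have hnn2 : ∀ k ∈ G.neighborFinset i, (0:ℝ) ≤ a i * a k * (φ k - φ i) ^ 2 :=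
        fun k _ => mul_nonneg (mul_nonneg (ha i).le (ha k).le) (sq_nonneg _)
      have h2 := (Finset.sum_eq_zero_iff_of_nonneg hnn2).mp h1 k
        ((SimpleGraph.mem_neighborFinset G i k).mpr hik)
      have h3 : (φ k - φ i) ^ 2 = 0 := by
        rcases mul_eq_zero.mp h2 with h | h
        · exact absurd h (mul_ne_zero (hane i) (hane k))
        · exact h
      have h4 := pow_eq_zero_iff (n := 2) (by norm_num) |>.mp h3
      linarith [sub_eq_zero.mp h4]
    have hconst := aux_const_of_adj G hG φ hterm
    refine ⟨φ ⟨0, hL⟩ + 1, fun i => ?_⟩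
    rw [hiff (φ ⟨0, hL⟩ + 1) i, hconst i ⟨0, hL⟩]
    ring
  · rintro ⟨c, hc⟩ i
    rw [hF i]
    have hφc : ∀ j, φ j = c - 1 := fun j => (hiff c j).mp (hc j)
    have h0 : ∑ k ∈ G.neighborFinset i, a k * (φ k - φ i) = 0 :=
      Finset.sum_eq_zero fun k _ => by rw [hφc k, hφc i, sub_self, mul_zero]
    rw [h0, mul_zero]
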